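/- If a and b are SP twins, i.e. a and b = a + 1 are both SP numbers, then for every x ∈ Q with x < a, either a • x = b • x, or a • x and b • x are consecutive in Q, i.e. b • x = N(a • x). -/
import Mathlib


/-- A natural number is an SP number if it is a prime times a square `k^2` with `k ≥ 2`. -/
def IsSP (n : ℕ) : Prop := ∃ p k : ℕ, p.Prime ∧ 2 ≤ k ∧ n = p * k ^ 2

/-- `Qset` consists of `1` together with all SP numbers. -/
def Qset : Set ℕ := {n | n = 1 ∨ IsSP n}

/-- `N x` is the smallest element of `Qset` strictly greater than `x`. -/
noncomputable def N (x : ℕ) : ℕ := sInf {y : ℕ | y ∈ Qset ∧ x < y}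

/-- The loop operation: `dot a b = N (|a - b|)`. -/
noncomputable def dot (a b : ℕ) : ℕ := N ((a : ℤ) - (b : ℤ)).natAbs

lemma Qset_unbounded (m : ℕ) : ∃ y, y ∈ Qset ∧ m < y := by
  refine ⟨2 * (m + 2) ^ 2, Or.inr ⟨2, m + 2, Nat.prime_two, by omega, rfl⟩, by nlinarith⟩

lemma N_spec (m : ℕ) : N m ∈ Qset ∧ m < N m := by
  have h := Qset_unbounded m
  exact Nat.sInf_mem (⟨h.choose, h.choose_spec⟩ : {y : ℕ | y ∈ Qset ∧ m < y}.Nonempty)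

theorem sp_twins_dot (a b : ℕ) (ha : IsSP a) (hb : b = a + 1) (hb' : IsSP b)
    (x : ℕ) (hx : x ∈ Qset) (hxa : x < a) :
    dot a x = dot b x ∨ dot b x = N (dot a x) := by
  have h1 : ((a : ℤ) - x).natAbs = a - x := by omega
  have h2 : ((b : ℤ) - x).natAbs = (a - x) + 1 := by omega
  set m := a - x with hm
  rw [dot, dot, h1, h2]
  have hspec := N_spec m
  rcases eq_or_lt_of_le (Nat.succ_le_of_lt hspec.2) with h | h
  · right; rw [← h]
  · left
    have hle : N (m + 1) ≤ N m :=
      Nat.sInf_le ⟨hspec.1, h⟩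
    have hge : N m ≤ N (m + 1) := by
      have hs := N_spec (m + 1)
      exact Nat.sInf_le ⟨hs.1, by omega⟩
    omega
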